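/- Let X be a random variable with P(X = j(a+j)) = π_{j,K}(a,b) for j = 0,...,K, where π_{j,K}(a,b) = C(K,j) (a-b+j+1)_{K-j}/(a+2j+1)_{K-j} · (b)_j/(a+j)_j. Then E(X) = Kb and Var(X) = K(K+a-b)b. -/

import Mathlib

set_option maxHeartbeats 1600000
set_option linter.unusedTactic false
set_option linter.unusedVariables false


/-- Pochhammer symbol `(a)_k = a(a+1)⋯(a+k-1)`. -/
noncomputable def poch (a : ℝ) (k : ℕ) : ℝ := ∏ i ∈ Finset.range k, (a + i)

/-- Normalizing constant `C_N(a,b,c)` of Wilson's 6-j weights. -/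
noncomputable def wC (N : ℕ) (a b c : ℝ) : ℝ :=
  poch (a - b + 1) N * poch (a - c + 1) N / (poch (2*a + 1) N * poch (-b - c + 1) N)

/-- Wilson's 6-j weight `p_{k,N}(a,b,c)`. -/
noncomputable def wp (k N : ℕ) (a b c : ℝ) : ℝ :=
  wC N a b c *
    (poch (2*a) k * poch (a + 1) k * poch (a + b) k * poch (a + c) k * poch (-(N : ℝ)) k /
      ((k.factorial : ℝ) * poch a k * poch (a - b + 1) k * poch (a - c + 1) k *
        poch (2*a + N + 1) k))

/-- The product of all Pochhammer factors appearing in denominators of `wp k N a b c`. -/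
noncomputable def wpden (k N : ℕ) (a b c : ℝ) : ℝ :=
  poch (2*a + 1) N * poch (-b - c + 1) N * poch a k * poch (a - b + 1) k *
    poch (a - c + 1) k * poch (2*a + N + 1) k

/-- The weights `π_{j,K}(a,b)`. -/
noncomputable def piw (j K : ℕ) (a b : ℝ) : ℝ :=
  (K.choose j : ℝ) * (poch (a - b + j + 1) (K - j) / poch (a + 2*j + 1) (K - j)) *
    (poch b j / poch (a + j) j)

lemma poch_zero (x : ℝ) : poch x 0 = 1 := by simp [poch]

lemma poch_one (x : ℝ) : poch x 1 = x := by simp [poch]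

lemma poch_succ (x : ℝ) (k : ℕ) : poch x (k+1) = poch x k * (x + k) := by
  simp [poch, Finset.prod_range_succ]

lemma poch_succ' (x : ℝ) (k : ℕ) : poch x (k+1) = x * poch (x+1) k := by
  rw [poch, Finset.prod_range_succ']
  simp only [Nat.cast_zero, add_zero]
  rw [mul_comm, poch]
  refine congrArg _ (Finset.prod_congr rfl fun i _ => ?_)
  push_cast; ring

lemma poch_pos {x : ℝ} (hx : 0 < x) (k : ℕ) : 0 < poch x k :=
  Finset.prod_pos fun i _ => by positivity

lemma poch_shift1 (x : ℝ) (k : ℕ) : x * poch (x+1) (k+1) = poch x k * (x+k) * (x+k+1) := by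
  have h1 : poch x (k+2) = x * poch (x+1) (k+1) := poch_succ' x (k+1)
  have h2 : poch x (k+2) = poch x k * (x+k) * (x+k+1) := by
    rw [show k+2 = (k+1)+1 from rfl, poch_succ, poch_succ]
    push_cast; ring
  rw [← h1, h2]

lemma poch_shift2 (x : ℝ) (m : ℕ) :
    poch x (m+1) * (x+m+1) = x * (x+1) * poch (x+2) m := by
  have h1 : poch x (m+2) = poch x (m+1) * (x+m+1) := by
    rw [poch_succ]; push_cast; ring
  have h2 : poch x (m+2) = x * (x+1) * poch (x+2) m := by
    rw [poch_succ', poch_succ']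
    rw [show x+1+1 = x+2 by ring]; ring
  rw [← h1, h2]

noncomputable def wg (K : ℕ) (a b : ℝ) : ℕ → ℝ
  | 0 => 0
  | (j+1) => (K.choose j : ℝ) * (poch (a - b + j + 1) (K - j) / poch (a + 2*j + 1) (K - j)) *
      (poch b (j+1) / (poch (a + j + 1) j * (a + K + j + 1)))

lemma tele (K j : ℕ) (a b : ℝ) (ha : -1 < a) (hj : j ≤ K + 1) :
    piw j (K+1) a b - piw j K a b = wg K a b j - wg K a b (j+1) := by
  match j, hj with
  | 0, _ =>
    simp only [piw, wg, Nat.choose_zero_right, Nat.sub_zero, Nat.cast_zero, Nat.cast_one,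
      poch_zero, Nat.cast_ofNat]
    norm_num
    rw [poch_succ, poch_succ]
    have h1 : (0:ℝ) < poch (a+1) K := poch_pos (by linarith) K
    have h2 : (0:ℝ) < a+1+K := by
      have := Nat.cast_nonneg (α := ℝ) K; linarith
    have h3 : (0:ℝ) < a+K+1 := by linarith
    rw [poch_one]
    field_simp
    ring
  | (i+1), hj =>
    by_cases hik : i = K
    · subst hik
      simp only [piw, wg, Nat.choose_succ_self, Nat.choose_self, Nat.cast_zero, Nat.cast_one,
        Nat.sub_self, poch_zero, Nat.cast_zero]
      norm_num
      rw [show (a + ((i:ℝ) + 1)) = a + (i:ℝ) + 1 by ring, poch_succ (a + (i:ℝ) + 1) i]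
      ring_nf
    · have hiK : i + 1 ≤ K := by omega
      obtain ⟨m, rfl⟩ : ∃ m, K = i + m + 1 := ⟨K - (i+1), by omega⟩
      simp only [piw, wg]
      rw [show i + m + 1 + 1 - (i+1) = m + 1 from by omega,
          show i + m + 1 - (i+1) = m from by omega,
          show i + m + 1 - i = m + 1 from by omega]
      push_cast
      have hi0 : (0:ℝ) ≤ (i:ℝ) := Nat.cast_nonneg i
      have hm0 : (0:ℝ) ≤ (m:ℝ) := Nat.cast_nonneg m
      have d1 : (0:ℝ) < a + (i:ℝ) + 1 := by linarith
      have d2 : (0:ℝ) < a + 2*(i:ℝ) + 1 := by linarith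
      have d3 : (0:ℝ) < a + 2*(i:ℝ) + 2 := by linarith
      have d4 : (0:ℝ) < a + 2*(i:ℝ) + (m:ℝ) + 2 := by linarith
      have d5 : (0:ℝ) < a + 2*(i:ℝ) + (m:ℝ) + 3 := by linarith
      have d6 : (0:ℝ) < (i:ℝ) + 1 := by linarith
      have hV : (0:ℝ) < poch (a + 2 * ((i:ℝ) + 1) + 1) m := poch_pos (by linarith) m
      have hA0 : (0:ℝ) < poch (a + (i:ℝ) + 1) i := poch_pos (by linarith) i
      have h1 : poch (a - b + ((i:ℝ) + 1) + 1) (m + 1)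
          = poch (a - b + ((i:ℝ) + 1) + 1) m * (a - b + (i:ℝ) + (m:ℝ) + 2) := by
        rw [poch_succ]; push_cast; ring
      have h2 : poch (a + 2 * ((i:ℝ) + 1) + 1) (m + 1)
          = poch (a + 2 * ((i:ℝ) + 1) + 1) m * (a + 2*(i:ℝ) + (m:ℝ) + 3) := by
        rw [poch_succ]; push_cast; ring
      have h3 : poch (a + ((i:ℝ) + 1)) (i + 1) = poch (a + (i:ℝ) + 1) i * (a + 2*(i:ℝ) + 1) := by
        rw [show (a + ((i:ℝ) + 1)) = a + (i:ℝ) + 1 by ring, poch_succ]; push_cast; ring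
      have h4 : poch (a - b + (i:ℝ) + 1) (m + 1)
          = (a - b + (i:ℝ) + 1) * poch (a - b + ((i:ℝ) + 1) + 1) m := by
        rw [poch_succ', show (a - b + (i:ℝ) + 1 + 1) = a - b + ((i:ℝ) + 1) + 1 by ring]
      have h5 : poch (a + 2 * (i:ℝ) + 1) (m + 1)
          = (a + 2*(i:ℝ) + 1) * (a + 2*(i:ℝ) + 2) * poch (a + 2 * ((i:ℝ) + 1) + 1) m
              / (a + 2*(i:ℝ) + (m:ℝ) + 2) := by
        have h := poch_shift2 (a + 2*(i:ℝ) + 1) m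
        rw [show (a + 2*(i:ℝ) + 1 + 2) = a + 2 * ((i:ℝ) + 1) + 1 by ring] at h
        rw [eq_div_iff d4.ne']
        linear_combination h
      have h6 : poch b (i + 1 + 1) = poch b (i + 1) * (b + (i:ℝ) + 1) := by
        rw [poch_succ]; push_cast; ring
      have h7 : poch (a + ((i:ℝ) + 1) + 1) (i + 1)
          = poch (a + (i:ℝ) + 1) i * (a + 2*(i:ℝ) + 1) * (a + 2*(i:ℝ) + 2) / (a + (i:ℝ) + 1) := by
        have h := poch_shift1 (a + (i:ℝ) + 1) i
        rw [show (a + (i:ℝ) + 1 + 1) = a + ((i:ℝ) + 1) + 1 by ring] at h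
        rw [eq_div_iff d1.ne']
        linear_combination h
      have h8 : (((i + m + 1 + 1).choose (i + 1) : ℕ) : ℝ)
          = ((i + m + 1).choose i : ℕ) + (((i + m + 1).choose (i + 1) : ℕ) : ℝ) := by
        exact_mod_cast congrArg (Nat.cast (R := ℝ)) (Nat.choose_succ_succ (i + m + 1) i)
      have h9 : (((i + m + 1).choose (i + 1) : ℕ) : ℝ)
          = ((i + m + 1).choose i : ℕ) * ((m:ℝ) + 1) / ((i:ℝ) + 1) := by
        have h := Nat.choose_succ_right_eq (i + m + 1) i
        rw [show i + m + 1 - i = m + 1 from by omega] at h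
        rw [eq_div_iff d6.ne']
        exact_mod_cast congrArg (Nat.cast (R := ℝ)) h
      have d7 : (0:ℝ) < a + ((i:ℝ) + (m:ℝ) + 1) + (i:ℝ) + 1 := by linarith
      have d8 : (0:ℝ) < a + ((i:ℝ) + (m:ℝ) + 1) + ((i:ℝ) + 1) + 1 := by linarith
      rw [h1, h2, h3, h4, h5, h6, h7, h8, h9]
      have e5 : a + (i:ℝ) * 2 + m + 3 ≠ 0 := by linarith
      have e2 : a + (i:ℝ) * 2 + 1 ≠ 0 := by linarith
      have e3 : a + (i:ℝ) * 2 + 2 ≠ 0 := by linarith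
      have e4 : a + (i:ℝ) * 2 + m + 2 ≠ 0 := by linarith
      field_simp [d1.ne', d2.ne', d3.ne', d4.ne', d5.ne', d6.ne', d7.ne', d8.ne',
        hV.ne', hA0.ne']
      ring

lemma wg_zero (K : ℕ) (a b : ℝ) : wg K a b 0 = 0 := rfl

lemma wg_top (K : ℕ) (a b : ℝ) : wg K a b (K+2) = 0 := by
  simp [wg, Nat.choose_succ_self]

lemma piw_top (K : ℕ) (a b : ℝ) : piw (K+1) K a b = 0 := by
  simp [piw, Nat.choose_succ_self]

lemma sum_one (a b : ℝ) (ha : -1 < a) : ∀ K : ℕ, ∑ j ∈ Finset.range (K+1), piw j K a b = 1 := by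
  intro K
  induction K with
  | zero => simp [piw, poch_zero]
  | succ K ih =>
    have htele : ∑ j ∈ Finset.range (K+2), (wg K a b j - wg K a b (j+1))
        = wg K a b 0 - wg K a b (K+2) := Finset.sum_range_sub' (fun j => wg K a b j) (K+2)
    calc ∑ j ∈ Finset.range (K+2), piw j (K+1) a b
        = ∑ j ∈ Finset.range (K+2), (piw j K a b + (wg K a b j - wg K a b (j+1))) := by
          refine Finset.sum_congr rfl fun j hj => ?_
          have hj' : j ≤ K + 1 := by
            have := Finset.mem_range.1 hj; omega
          have := tele K j a b ha hj'
          linarith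
      _ = (∑ j ∈ Finset.range (K+2), piw j K a b)
            + ∑ j ∈ Finset.range (K+2), (wg K a b j - wg K a b (j+1)) :=
          Finset.sum_add_distrib
      _ = 1 := by
          rw [htele, wg_zero, wg_top, Finset.sum_range_succ, piw_top, ih]
          ring

lemma step (K j : ℕ) (a b : ℝ) (ha : -1 < a) :
    ((j:ℝ)+1) * (a + (j:ℝ) + 1) * piw (j+1) (K+1) a b = ((K:ℝ)+1) * b * piw j K (a+2) (b+1) := by
  simp only [piw]
  rw [show (K+1) - (j+1) = K - j from by omega]
  push_cast
  have hj0 : (0:ℝ) ≤ (j:ℝ) := Nat.cast_nonneg j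
  have e1 : (a - b + ((j:ℝ)+1) + 1) = a + 2 - (b+1) + (j:ℝ) + 1 := by ring
  have e2 : (a + 2*((j:ℝ)+1) + 1) = a + 2 + 2*(j:ℝ) + 1 := by ring
  rw [e1, e2, poch_succ' b j]
  rw [show (a + ((j:ℝ)+1)) = a + (j:ℝ) + 1 by ring, poch_succ' (a + (j:ℝ) + 1) j]
  rw [show (a + (j:ℝ) + 1 + 1) = a + 2 + (j:ℝ) by ring]
  have hc : (((K+1).choose (j+1) : ℕ) : ℝ) * ((j:ℝ)+1) = ((K:ℝ)+1) * ((K.choose j : ℕ) : ℝ) := by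
    have h := Nat.add_one_mul_choose_eq K j
    exact_mod_cast (congrArg (Nat.cast (R := ℝ)) h).symm
  have n1 : (0:ℝ) < a + (j:ℝ) + 1 := by linarith
  have n2 : poch (a + 2 + (j:ℝ)) j ≠ 0 := (poch_pos (by linarith) j).ne'
  have n3 : poch (a + 2 + 2*(j:ℝ) + 1) (K - j) ≠ 0 := (poch_pos (by linarith) (K - j)).ne'
  have n4 : ((j:ℝ)+1) ≠ 0 := by positivity
  have hc' : (((K+1).choose (j+1) : ℕ) : ℝ)
      = ((K:ℝ)+1) * ((K.choose j : ℕ) : ℝ) / ((j:ℝ)+1) := by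
    rw [eq_div_iff n4]; linarith [hc]
  rw [hc']
  field_simp

lemma mean (a b : ℝ) (ha : -1 < a) (K : ℕ) :
    ∑ j ∈ Finset.range (K+1), (j:ℝ) * (a + j) * piw j K a b = K * b := by
  cases K with
  | zero => simp
  | succ N =>
    rw [Finset.sum_range_succ']
    have h1 : ∀ j ∈ Finset.range (N+1),
        ((j+1 : ℕ):ℝ) * (a + ((j+1 : ℕ):ℝ)) * piw (j+1) (N+1) a b
          = ((N:ℝ)+1) * b * piw j N (a+2) (b+1) := by
      intro j _
      have hs := step N j a b ha
      push_cast
      linear_combination hs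
    rw [Finset.sum_congr rfl h1, ← Finset.mul_sum, sum_one (a+2) (b+1) (by linarith) N]
    push_cast; ring

theorem piw_mean_variance (K : ℕ) (a b : ℝ)
    (ha : a > -1) (hb1 : 0 < b) (hb2 : b < a + 1)
    (hsum : ∑ j ∈ Finset.range (K + 1), piw j K a b = 1) :
    (∑ j ∈ Finset.range (K + 1), (j : ℝ) * (a + j) * piw j K a b = K * b) ∧
    ((∑ j ∈ Finset.range (K + 1), ((j : ℝ) * (a + j))^2 * piw j K a b)
        - ((K : ℝ) * b)^2 = K * (K + a - b) * b) := by
  refine ⟨mean a b ha K, ?_⟩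
  cases K with
  | zero => simp
  | succ N =>
    rw [Finset.sum_range_succ']
    have h1 : ∀ j ∈ Finset.range (N+1),
        (((j+1:ℕ):ℝ) * (a + ((j+1:ℕ):ℝ)))^2 * piw (j+1) (N+1) a b
        = ((N:ℝ)+1)*b * ((j:ℝ)*(a + 2 + (j:ℝ))*piw j N (a+2) (b+1)
            + (a+1)*piw j N (a+2) (b+1)) := by
      intro j _
      have hs := step N j a b ha
      push_cast
      linear_combination (((j:ℝ)+1)*(a+(j:ℝ)+1)) * hs
    rw [Finset.sum_congr rfl h1, ← Finset.mul_sum, Finset.sum_add_distrib, ← Finset.mul_sum,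
      sum_one (a+2) (b+1) (by linarith) N]
    have hm := mean (a+2) (b+1) (by linarith) N
    rw [hm]
    push_cast; ring
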